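/- For an integer p ≥ 2 and nonnegative integers M and d, one has r_p(M,d) = Σ_{(M−d)/p ≤ N ≤ M/p} r_p(N, M − N·p), where the sum is over integers N in the indicated range. -/
import Mathlib

/-- The set counted by `rp`. -/
def Sset (p M d : ℤ) : Set (ℕ →₀ ℤ) :=
  {m : ℕ →₀ ℤ | (∀ i, 0 ≤ m i) ∧ (∀ i, m (i + 1) ≤ m i) ∧ m 0 ≤ d ∧
    (m.sum fun i a => a * p ^ i) = M}

noncomputable def consF (a : ℤ) (m : ℕ →₀ ℤ) : ℕ →₀ ℤ :=
  Finsupp.single 0 a + Finsupp.embDomain ⟨Nat.succ, Nat.succ_injective⟩ m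

noncomputable def tailF (m : ℕ →₀ ℤ) : ℕ →₀ ℤ :=
  Finsupp.comapDomain Nat.succ m Nat.succ_injective.injOn

@[simp] lemma consF_zero (a : ℤ) (m : ℕ →₀ ℤ) : consF a m 0 = a := by
  have h0 : (0 : ℕ) ∉ Set.range (⟨Nat.succ, Nat.succ_injective⟩ : ℕ ↪ ℕ) := by
    simp [Function.Embedding.coeFn_mk]
  simp [consF, Finsupp.embDomain_notin_range _ _ _ h0]

@[simp] lemma consF_succ (a : ℤ) (m : ℕ →₀ ℤ) (i : ℕ) : consF a m (i + 1) = m i := by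
  rw [consF, Finsupp.add_apply,
    show (i + 1 : ℕ) = (⟨Nat.succ, Nat.succ_injective⟩ : ℕ ↪ ℕ) i from rfl,
    Finsupp.embDomain_apply]
  simp [Finsupp.single_apply]

@[simp] lemma tailF_apply (m : ℕ →₀ ℤ) (i : ℕ) : tailF m i = m (i + 1) := rfl

lemma cons_tail (m : ℕ →₀ ℤ) : consF (m 0) (tailF m) = m := by
  ext i
  cases i with
  | zero => simp
  | succ j => simp

lemma tail_cons (a : ℤ) (m : ℕ →₀ ℤ) : tailF (consF a m) = m := by
  ext i; simp

lemma consF_injective (a : ℤ) : Function.Injective (consF a) :=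
  Function.LeftInverse.injective (g := tailF) (fun m => tail_cons a m)

lemma sum_consF (p a : ℤ) (m : ℕ →₀ ℤ) :
    ((consF a m).sum fun i b => b * p ^ i) = a + p * (m.sum fun i b => b * p ^ i) := by
  rw [consF, Finsupp.sum_add_index' (by simp) (by intros; ring)]
  rw [Finsupp.sum_single_index (by simp), Finsupp.sum_embDomain]
  simp only [Function.Embedding.coeFn_mk, pow_zero, mul_one]
  rw [Finsupp.mul_sum]
  congr 1
  apply Finsupp.sum_congr
  intros i _
  rw [pow_succ]
  ring

lemma term_le_sum (p : ℤ) (hp : 2 ≤ p) (m : ℕ →₀ ℤ) (hpos : ∀ i, 0 ≤ m i) (j : ℕ) :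
    m j * p ^ j ≤ m.sum fun i a => a * p ^ i := by
  have hterm : ∀ i ∈ m.support, 0 ≤ m i * p ^ i := fun i _ =>
    mul_nonneg (hpos i) (pow_nonneg (by linarith) i)
  by_cases hj : j ∈ m.support
  · exact Finset.single_le_sum hterm hj
  · have : m j = 0 := Finsupp.notMem_support_iff.mp hj
    rw [this, zero_mul]
    exact Finset.sum_nonneg hterm

lemma sum_nonneg' (p : ℤ) (hp : 2 ≤ p) (m : ℕ →₀ ℤ) (hpos : ∀ i, 0 ≤ m i) :
    0 ≤ m.sum fun i a => a * p ^ i :=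
  Finset.sum_nonneg fun i _ => mul_nonneg (hpos i) (pow_nonneg (by linarith) i)

lemma support_bound (p M d : ℤ) (hp : 2 ≤ p) (m : ℕ →₀ ℤ) (hm : m ∈ Sset p M d)
    (j : ℕ) (hj : j ∈ m.support) : (j : ℤ) + 1 ≤ M := by
  obtain ⟨h0, h1, _, h3⟩ := hm
  have anti : Antitone (m : ℕ → ℤ) := antitone_nat_of_succ_le h1
  have hj1 : 1 ≤ m j := by
    have := Finsupp.mem_support_iff.mp hj
    have := h0 j
    omega
  have hsub : Finset.range (j + 1) ⊆ m.support := by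
    intro i hi
    rw [Finset.mem_range] at hi
    have : m j ≤ m i := anti (by omega)
    exact Finsupp.mem_support_iff.mpr (by omega)
  have hone : ∀ i ∈ Finset.range (j + 1), (1 : ℤ) ≤ m i * p ^ i := by
    intro i hi
    have h1p : (1 : ℤ) ≤ p ^ i := one_le_pow₀ (by linarith)
    have hmi : 1 ≤ m i := le_trans hj1 (anti (by simpa using Nat.lt_succ_iff.mp (Finset.mem_range.mp hi)))
    nlinarith
  calc (j : ℤ) + 1 = ∑ _i ∈ Finset.range (j + 1), (1 : ℤ) := by simp
    _ ≤ ∑ i ∈ Finset.range (j + 1), m i * p ^ i := Finset.sum_le_sum hone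
    _ ≤ ∑ i ∈ m.support, m i * p ^ i := Finset.sum_le_sum_of_subset_of_nonneg hsub
        (fun i _ _ => mul_nonneg (h0 i) (pow_nonneg (by linarith) i))
    _ = M := h3

lemma value_bound (p M d : ℤ) (hp : 2 ≤ p) (m : ℕ →₀ ℤ) (hm : m ∈ Sset p M d) (j : ℕ) :
    m j ≤ M := by
  obtain ⟨h0, h1, _, h3⟩ := hm
  have h1p : (1 : ℤ) ≤ p ^ j := one_le_pow₀ (by linarith)
  have := term_le_sum p hp m h0 j
  nlinarith [h0 j]

lemma Sset_finite (p : ℤ) (hp : 2 ≤ p) (M d : ℤ) : (Sset p M d).Finite := by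
  classical
  set K := M.toNat with hK
  apply Set.Finite.of_finite_image
    (f := fun (m : ℕ →₀ ℤ) => fun i : Fin K => (⟨min (m i).toNat K, by omega⟩ : Fin (K + 1)))
  · exact Set.toFinite _
  · intro m1 hm1 m2 hm2 heq
    have key : ∀ (m : ℕ →₀ ℤ), m ∈ Sset p M d → ∀ j : ℕ, K ≤ j → m j = 0 := by
      intro m hm j hj
      by_contra h
      have hjs : j ∈ m.support := Finsupp.mem_support_iff.mpr h
      have := support_bound p M d hp m hm j hjs
      omega
    have kb : ∀ (m : ℕ →₀ ℤ), m ∈ Sset p M d → ∀ j : ℕ, (m j).toNat ≤ K := by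
      intro m hm j
      have := value_bound p M d hp m hm j
      omega
    ext j
    by_cases hj : j < K
    · have := congrFun heq ⟨j, hj⟩
      simp only [Fin.mk.injEq] at this
      have b1 := kb m1 hm1 j
      have b2 := kb m2 hm2 j
      have p1 := hm1.1 j
      have p2 := hm2.1 j
      omega
    · rw [key m1 hm1 j (by omega), key m2 hm2 j (by omega)]

/-- `r_p(M,d)`: the number of finitely supported nonincreasing sequences `m` of nonnegative
integers with `m 0 ≤ d` and `Σ m_i p^i = M`. -/
noncomputable def rp (p : ℤ) (M d : ℤ) : ℕ :=
  {m : ℕ →₀ ℤ | (∀ i, 0 ≤ m i) ∧ (∀ i, m (i + 1) ≤ m i) ∧ m 0 ≤ d ∧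
    (m.sum fun i a => a * p ^ i) = M}.ncard

lemma rp_eq (p M d : ℤ) : rp p M d = (Sset p M d).ncard := rfl

/-- `r_p(M,d) = Σ_{(M−d)/p ≤ N ≤ M/p} r_p(N, M − N·p)`. -/
theorem stmt_2 (p : ℤ) (hp : 2 ≤ p) (M d : ℕ) :
    rp p M d =
      ∑ N ∈ Finset.Icc ⌈((M : ℚ) - (d : ℚ)) / (p : ℚ)⌉ ⌊(M : ℚ) / (p : ℚ)⌋,
        rp p N ((M : ℤ) - N * p) := by
  classical
  have hp0 : (0 : ℤ) < p := by linarith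
  have hpQ : (0 : ℚ) < (p : ℚ) := by exact_mod_cast hp0
  set a := ⌈((M : ℚ) - (d : ℚ)) / (p : ℚ)⌉ with ha
  set b := ⌊(M : ℚ) / (p : ℚ)⌋ with hb
  have hmem : ∀ N : ℤ, N ∈ Finset.Icc a b ↔ ((M : ℤ) - d ≤ N * p ∧ N * p ≤ M) := by
    intro N
    rw [Finset.mem_Icc, ha, hb, Int.ceil_le, Int.le_floor, div_le_iff₀ hpQ, le_div_iff₀ hpQ]
    constructor
    · rintro ⟨h1, h2⟩
      constructor
      · exact_mod_cast h1
      · exact_mod_cast h2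
    · rintro ⟨h1, h2⟩
      constructor
      · exact_mod_cast h1
      · exact_mod_cast h2
  set F : ℤ → Finset (ℕ →₀ ℤ) := fun N =>
    ((Sset_finite p hp N ((M : ℤ) - N * p)).toFinset).image (consF ((M : ℤ) - N * p)) with hF
  have hdisj : ∀ N ∈ Finset.Icc a b, ∀ N' ∈ Finset.Icc a b, N ≠ N' →
      Disjoint (F N) (F N') := by
    intro N _ N' _ hNN'
    rw [Finset.disjoint_left]
    rintro x hx hx'
    rw [hF, Finset.mem_image] at hx hx'
    obtain ⟨m1, _, rfl⟩ := hx
    obtain ⟨m2, _, he⟩ := hx'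
    have : ((M : ℤ) - N' * p) = ((M : ℤ) - N * p) := by
      have := congrArg (fun f : ℕ →₀ ℤ => f 0) he
      simpa using this
    have : N * p = N' * p := by omega
    exact hNN' (mul_right_cancel₀ (by omega) this)
  have key : Sset p (M : ℤ) (d : ℤ) = ↑((Finset.Icc a b).biUnion F) := by
    ext m
    simp only [Finset.coe_biUnion, Set.mem_iUnion, Finset.mem_coe, hF, Finset.mem_image,
      Set.Finite.mem_toFinset]
    constructor
    · intro hm
      obtain ⟨h0, h1, h2, h3⟩ := hm
      set N := ((tailF m).sum fun i b => b * p ^ i) with hN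
      have hsplit : (M : ℤ) = m 0 + N * p := by
        have : (M : ℤ) = m 0 + p * N := by
          rw [← h3]
          conv_lhs => rw [← cons_tail m]
          rw [sum_consF]
        linarith [mul_comm p N]
      have htpos : ∀ i, 0 ≤ tailF m i := fun i => h0 (i + 1)
      have hNmem : N ∈ Finset.Icc a b := by
        rw [hmem]
        constructor
        · have := h2; omega
        · have := h0 0; omega
      refine ⟨N, hNmem, tailF m, ⟨htpos, fun i => h1 (i + 1), ?_, rfl⟩, ?_⟩
      · have : tailF m 0 = m 1 := rfl
        rw [this]
        have h10 : m 1 ≤ m 0 := by simpa using h1 0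
        omega
      · have hm0 : (M : ℤ) - N * p = m 0 := by omega
        rw [hm0]
        exact cons_tail m
    · rintro ⟨N, hN, m', hm', rfl⟩
      obtain ⟨h0, h1, h2, h3⟩ := hm'
      rw [hmem] at hN
      have hc0 : 0 ≤ (M : ℤ) - N * p := by omega
      have hcd : (M : ℤ) - N * p ≤ (d : ℤ) := by omega
      refine ⟨?_, ?_, ?_, ?_⟩
      · intro i
        cases i with
        | zero => simpa using hc0
        | succ j => simpa using h0 j
      · intro i
        cases i with
        | zero => simpa using h2
        | succ j => simpa using h1 j
      · simpa using hcd
      · rw [sum_consF, h3]; linarith [mul_comm p N]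
  rw [rp_eq, key, Set.ncard_coe_finset, Finset.card_biUnion hdisj]
  apply Finset.sum_congr rfl
  intro N _
  rw [hF]
  rw [Finset.card_image_of_injective _ (consF_injective _)]
  rw [rp_eq, Set.ncard_eq_toFinset_card _ (Sset_finite p hp N ((M : ℤ) - N * p))]
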